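/- For every prime p ≥ 7, the function g(r) = f_r(p²) − f_r(p² − 1) = 2·p^r − f_r(p² − 1) is strictly increasing in r on the interval (0, ∞). -/

import Mathlib

/-- The Ruth–Aaron function: for `n = p₁^{a₁} ⋯ p_k^{a_k}`,
`fr r n = ∑ aᵢ · pᵢ^r` (real power); `fr r 1 = 0`. -/
noncomputable def fr (r : ℝ) (n : ℕ) : ℝ :=
  ∑ p ∈ n.primeFactors, (n.factorization p : ℝ) * (p : ℝ) ^ r

theorem stmt7 (p : ℕ) (hp : p.Prime) (hp7 : 7 ≤ p) :
    StrictMonoOn (fun r : ℝ => fr r (p ^ 2) - fr r (p ^ 2 - 1)) (Set.Ioi 0) := by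
  set n : ℕ := p ^ 2 - 1 with hn
  have hn48 : 48 ≤ n := by
    have : 49 ≤ p ^ 2 := by nlinarith
    omega
  have hn0 : n ≠ 0 := by omega
  set S := n.primeFactors with hS
  -- key size bound on prime factors of n
  have hfac : (p - 1) * (p + 1) = n := by
    obtain ⟨k, rfl⟩ := Nat.exists_eq_add_of_le hp7
    have h1 : (7 + k) ^ 2 = (7 + k - 1) * (7 + k + 1) + 1 := by
      have : 7 + k - 1 = 6 + k := by omega
      rw [this]; ring
    omega
  have hodd : Odd p := hp.odd_of_ne_two (by omega)
  have hkey : ∀ q ∈ S, 2 * q ≤ p + 1 := by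
    intro q hq
    have hqp : q.Prime := Nat.prime_of_mem_primeFactors hq
    have hqd : q ∣ n := Nat.dvd_of_mem_primeFactors hq
    rw [← hfac] at hqd
    have haux : ∀ m : ℕ, 4 ≤ m → Even m → q ∣ m → 2 * q ≤ m := by
      intro m hm4 hme hqm
      obtain ⟨c, hc⟩ := hqm
      have hc0 : c ≠ 0 := by rintro rfl; omega
      have hc1 : c ≠ 1 := by
        rintro rfl
        rw [mul_one] at hc
        have h2 : 2 ∣ q := hc ▸ hme.two_dvd
        have := (Nat.Prime.eq_one_or_self_of_dvd hqp 2 h2).resolve_left (by omega)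
        omega
      calc 2 * q ≤ c * q := by
            have : 2 ≤ c := by omega
            exact Nat.mul_le_mul_right q this
        _ = m := by rw [hc]; ring
    rcases (Nat.Prime.dvd_mul hqp).mp hqd with h | h
    · have : 2 * q ≤ p - 1 := by
        apply haux _ (by omega) _ h
        have : Even (p - 1) := Nat.Odd.sub_odd hodd odd_one
        exact this
      omega
    · exact haux _ (by omega) (by simpa using hodd.add_one) h
  -- real quantities
  have hp0 : (0:ℝ) < p := by positivity
  set Q : ℝ := ((p:ℝ) + 1) / 2 with hQ
  have hQ0 : (0:ℝ) < Q := by positivity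
  have hQp : Q < p := by
    rw [hQ]
    have : (7:ℝ) ≤ p := by exact_mod_cast hp7
    linarith
  -- rewrite the function
  have hfun : (fun r : ℝ => fr r (p ^ 2) - fr r (p ^ 2 - 1)) =
      fun r : ℝ => 2 * (p:ℝ) ^ r - ∑ q ∈ S, (n.factorization q : ℝ) * (q:ℝ) ^ r := by
    funext r
    unfold fr
    congr 1
    rw [Nat.primeFactors_prime_pow (by norm_num) hp, Finset.sum_singleton]
    simp [hp.factorization_pow]
  rw [hfun]
  -- log identity
  have hprod : ∏ q ∈ S, q ^ n.factorization q = n := by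
    conv_rhs => rw [← Nat.factorization_prod_pow_eq_self hn0]
    rw [Finsupp.prod, Nat.support_factorization]
  have hlogn : ∑ q ∈ S, (n.factorization q : ℝ) * Real.log q = Real.log n := by
    conv_rhs => rw [← hprod]
    push_cast
    rw [Real.log_prod]
    · refine Finset.sum_congr rfl fun q hq => ?_
      rw [Real.log_pow]
    · intro q hq
      have := (Nat.prime_of_mem_primeFactors hq).pos
      positivity
  have hD : ∀ r : ℝ, HasDerivAt
      (fun r : ℝ => 2 * (p:ℝ) ^ r - ∑ q ∈ S, (n.factorization q : ℝ) * (q:ℝ) ^ r)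
      (2 * ((p:ℝ) ^ r * Real.log p) -
        ∑ q ∈ S, (n.factorization q : ℝ) * ((q:ℝ) ^ r * Real.log q)) r := by
    intro r
    apply HasDerivAt.sub
    · exact ((Real.hasStrictDerivAt_const_rpow hp0 r).hasDerivAt).const_mul 2
    · apply HasDerivAt.fun_sum
      intro q hq
      have hq0 : (0:ℝ) < q := by exact_mod_cast (Nat.prime_of_mem_primeFactors hq).pos
      exact ((Real.hasStrictDerivAt_const_rpow hq0 r).hasDerivAt).const_mul _
  apply strictMonoOn_of_deriv_pos (convex_Ioi 0)
  · exact fun x _ => (hD x).continuousAt.continuousWithinAt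
  · intro r hr
    rw [interior_Ioi] at hr
    have hr0 : 0 < r := hr
    rw [(hD r).deriv]
    have hbound : ∑ q ∈ S, (n.factorization q : ℝ) * ((q:ℝ) ^ r * Real.log q)
        ≤ Q ^ r * Real.log n := by
      rw [← hlogn, Finset.mul_sum]
      apply Finset.sum_le_sum
      intro q hq
      have hq2 : 2 ≤ q := (Nat.prime_of_mem_primeFactors hq).two_le
      have hqQ : (q:ℝ) ≤ Q := by
        have := hkey q hq
        have : (2:ℝ) * q ≤ (p:ℝ) + 1 := by exact_mod_cast this
        rw [hQ]; linarith
      have hlq : 0 ≤ Real.log q := Real.log_nonneg (by exact_mod_cast Nat.one_le_iff_ne_zero.mpr (by omega))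
      have hrp : (q:ℝ) ^ r ≤ Q ^ r :=
        Real.rpow_le_rpow (by positivity) hqQ hr0.le
      have : (q:ℝ) ^ r * Real.log q ≤ Q ^ r * Real.log q :=
        mul_le_mul_of_nonneg_right hrp hlq
      calc (n.factorization q : ℝ) * ((q:ℝ) ^ r * Real.log q)
          ≤ (n.factorization q : ℝ) * (Q ^ r * Real.log q) := by
            apply mul_le_mul_of_nonneg_left this (by positivity)
        _ = Q ^ r * ((n.factorization q : ℝ) * Real.log q) := by ring
    have hlogn_lt : Real.log n < 2 * Real.log p := by
      have h1 : Real.log n < Real.log (p ^ 2) := by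
        apply Real.log_lt_log (by positivity)
        have : n < p ^ 2 := by omega
        exact_mod_cast this
      rwa [show ((p:ℕ):ℝ) ^ (2:ℕ) = (p:ℝ) ^ (2:ℕ) from rfl, Real.log_pow] at h1
    have hlogn_pos : 0 < Real.log n := Real.log_pos (by exact_mod_cast (by omega : 1 < n))
    have hQr : Q ^ r < (p:ℝ) ^ r := Real.rpow_lt_rpow hQ0.le hQp hr0
    have hpr : 0 < (p:ℝ) ^ r := Real.rpow_pos_of_pos hp0 r
    have : Q ^ r * Real.log n < (p:ℝ) ^ r * (2 * Real.log p) := by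
      calc Q ^ r * Real.log n < (p:ℝ) ^ r * Real.log n :=
            mul_lt_mul_of_pos_right hQr hlogn_pos
        _ < (p:ℝ) ^ r * (2 * Real.log p) :=
            mul_lt_mul_of_pos_left hlogn_lt hpr
    nlinarith [hbound]
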